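/- Let n ≥ 1. Let T = {S : Finset (Fin n) | S.card = 3} and P = {S : Finset (Fin n) | S.card = 2}, and let d₃ : (T →₀ Λ_n) → (P →₀ Λ_n) be the Λ_n-linear map defined on basis elements by d₃(e_{{i,j,k}}) = (t_i − 1)·e_{{j,k}} − (t_j − 1)·e_{{i,k}} + (t_k − 1)·e_{{i,j}} for i < j < k. Let B = coker d₃ (the Alexander invariant of the free group F_n, with complex coefficients). Then for every k ≥ 1 and every t : Fin n → ℂˣ: Module.rank ℂ (ℂ_t ⊗[Λ_n] B) ≥ k if and only if (k ≤ n − 1) or (t = 1 and k ≤ n(n−1)/2). Equivalently, V_k(B) = (ℂˣ)ⁿ for 1 ≤ k ≤ n−1, V_k(B) = {1} for n ≤ k ≤ n(n−1)/2, and V_k(B) = ∅ for k > n(n−1)/2. -/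

import Mathlib

noncomputable section

/-- The ring `Λ_n = ℂ[ℤⁿ]` of complex Laurent polynomials in `n` variables. -/
abbrev Lau (n : ℕ) : Type := AddMonoidAlgebra ℂ (Fin n → ℤ)

/-- The character of the lattice `ℤⁿ` determined by a point `t ∈ (ℂˣ)ⁿ`:
it sends `m : Fin n → ℤ` to `∏ i, (t i)^(m i)`. -/
def charUnits {n : ℕ} (t : Fin n → ℂˣ) : Multiplicative (Fin n → ℤ) →* ℂˣ :=
  ∏ i : Fin n, (zpowersHom ℂˣ (t i)).comp
    (AddMonoidHom.toMultiplicative (Pi.evalAddMonoidHom (fun _ : Fin n => ℤ) i))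

/-- The evaluation ring homomorphism `ε_t : Λ_n → ℂ`, sending the basis element
indexed by `m : Fin n → ℤ` to `∏ i, (t i)^(m i)`. -/
def epsHom {n : ℕ} (t : Fin n → ℂˣ) : Lau n →+* ℂ :=
  ((AddMonoidAlgebra.lift ℂ ℂ (Fin n → ℤ))
    ((Units.coeHom ℂ).comp (charUnits t))).toRingHom

/-- `ℂ_t`: the field `ℂ`, regarded as a `Λ_n`-module through `ε_t`. -/
def CV (n : ℕ) (t : Fin n → ℂˣ) : Type := ℂ

instance (n : ℕ) (t : Fin n → ℂˣ) : AddCommGroup (CV n t) :=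
  inferInstanceAs (AddCommGroup ℂ)

instance (n : ℕ) (t : Fin n → ℂˣ) : Module ℂ (CV n t) :=
  inferInstanceAs (Module ℂ ℂ)

instance (n : ℕ) (t : Fin n → ℂˣ) : Module (Lau n) (CV n t) :=
  Module.compHom ℂ (epsHom t)

instance (n : ℕ) (t : Fin n → ℂˣ) : SMulCommClass (Lau n) ℂ (CV n t) := by
  haveI h : SMulCommClass ℂ ℂ (CV n t) := inferInstanceAs (SMulCommClass ℂ ℂ ℂ)
  exact ⟨fun a c x => smul_comm (epsHom t a) c x⟩

/-- The variable `t_i ∈ Λ_n`: the image of the `i`-th lattice basis vector. -/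
def tvar (n : ℕ) (i : Fin n) : Lau n :=
  AddMonoidAlgebra.single (Pi.single i (1 : ℤ)) (1 : ℂ)


set_option linter.unusedSectionVars false
set_option linter.unusedVariables false
set_option maxHeartbeats 1000000
set_option synthInstance.maxHeartbeats 1000000

lemma eps_single {n : ℕ} (t : Fin n → ℂˣ) (m : Fin n → ℤ) (c : ℂ) :
    epsHom t (AddMonoidAlgebra.single m c) = c * ∏ i, (t i : ℂ) ^ (m i) := by
  simp [epsHom, AddMonoidAlgebra.lift_single, charUnits]

lemma eps_algebraMap {n : ℕ} (t : Fin n → ℂˣ) (c : ℂ) :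
    epsHom t (algebraMap ℂ (Lau n) c) = c := by
  have : algebraMap ℂ (Lau n) c = AddMonoidAlgebra.single 0 c := by
    rw [AddMonoidAlgebra.coe_algebraMap]; rfl
  rw [this, eps_single]; simp

lemma eps_tvar {n : ℕ} (t : Fin n → ℂˣ) (i : Fin n) :
    epsHom t (tvar n i) = (t i : ℂ) := by
  rw [tvar, eps_single, one_mul]
  rw [Finset.prod_eq_single i (fun b _ hb => by simp [Pi.single_eq_of_ne hb]) (by simp)]
  simp

lemma cv_smul_def {n : ℕ} (t : Fin n → ℂˣ) (l : Lau n) (x : CV n t) :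
    l • x = epsHom t l • x := rfl

instance (n : ℕ) (t : Fin n → ℂˣ) : IsScalarTower ℂ (Lau n) (CV n t) := by
  constructor
  intro c l x
  rw [cv_smul_def, cv_smul_def,
    show c • l = algebraMap ℂ (Lau n) c * l from Algebra.smul_def c l,
    map_mul, eps_algebraMap, mul_smul]

section
variable {n : ℕ}
abbrev PP (n : ℕ) := {S : Finset (Fin n) // S.card = 2}
variable (C : Type) [AddCommGroup C] [Module ℂ C] (one : C)

def pr (i j : Fin n) (h : i ≠ j) : PP n := ⟨{i, j}, Finset.card_pair h⟩

def gg (i j : Fin n) : PP n →₀ C :=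
  if h : i < j then Finsupp.single (pr i j h.ne) one
  else if h' : j < i then -Finsupp.single (pr i j h'.ne') one
  else 0

variable (a : Fin n → ℂ)

def uu (i j k : Fin n) : PP n →₀ C :=
  a i • gg C one j k - a j • gg C one i k + a k • gg C one i j

lemma pr_comm (i j : Fin n) (h : i ≠ j) : pr i j h = pr j i h.symm :=
  Subtype.ext (Finset.pair_comm i j)

lemma gg_comm (i j : Fin n) : gg C one j i = -gg C one i j := by
  rcases lt_trichotomy i j with h | h | h
  · rw [gg, gg, dif_neg (asymm h), dif_pos h, dif_pos h, pr_comm]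
  · subst h; simp [gg]
  · rw [gg, gg, dif_pos h, dif_neg (asymm h), dif_pos h, pr_comm, neg_neg]

lemma gg_sorted (i j : Fin n) (h : i < j) : gg C one i j = Finsupp.single (pr i j h.ne) one := by
  rw [gg, dif_pos h]

lemma uu_sorted (i j k : Fin n) (hij : i < j) (hjk : j < k) :
    uu C one a i j k = a i • Finsupp.single (pr j k hjk.ne) one
      - a j • Finsupp.single (pr i k (hij.trans hjk).ne) one
      + a k • Finsupp.single (pr i j hij.ne) one := by
  rw [uu, gg_sorted _ _ _ _ hjk, gg_sorted _ _ _ _ (hij.trans hjk), gg_sorted _ _ _ _ hij]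

lemma uu_swap01 (i j k : Fin n) : uu C one a j i k = -uu C one a i j k := by
  rw [uu, uu, gg_comm C one i j]
  module

lemma uu_swap12 (i j k : Fin n) : uu C one a i k j = -uu C one a i j k := by
  rw [uu, uu, gg_comm C one j k]
  module

lemma uu_cycle (i j k : Fin n) : uu C one a k i j = uu C one a i j k := by
  rw [show uu C one a k i j = - uu C one a i k j from uu_swap01 C one a i k j,
    uu_swap12 C one a i j k, neg_neg]

lemma uu_koszul (p i j k : Fin n) :
    a p • uu C one a i j k =
      a i • uu C one a p j k - a j • uu C one a p i k + a k • uu C one a p i j := by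
  simp only [uu]
  module
end

section
variable {n : ℕ} (C : Type) [AddCommGroup C] [Module ℂ C] [NoZeroSMulDivisors ℂ C]
  (one : C) (a : Fin n → ℂ)

def selA (S : Finset (Fin n)) (h : S.card = 2) : Fin n :=
  S.min' (Finset.card_pos.mp (by omega))

def selB (S : Finset (Fin n)) (h : S.card = 2) : Fin n :=
  S.max' (Finset.card_pos.mp (by omega))

lemma selA_lt_selB (S : Finset (Fin n)) (h : S.card = 2) : selA S h < selB S h :=
  Finset.min'_lt_max'_of_card S (by omega)

lemma sel_spec (S : Finset (Fin n)) (h : S.card = 2) : S = {selA S h, selB S h} := by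
  refine (Finset.eq_of_subset_of_card_le ?_ ?_).symm
  · intro x hx
    simp only [Finset.mem_insert, Finset.mem_singleton] at hx
    rcases hx with rfl | rfl
    · exact Finset.min'_mem _ _
    · exact Finset.max'_mem _ _
  · rw [h, Finset.card_pair (selA_lt_selB S h).ne]

lemma selA_pair (y z : Fin n) (h : y < z) (hc : ({y, z} : Finset (Fin n)).card = 2) :
    selA {y, z} hc = y := by
  refine le_antisymm (Finset.min'_le _ y (by simp)) (Finset.le_min' _ _ _ ?_)
  intro w hw
  simp only [Finset.mem_insert, Finset.mem_singleton] at hw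
  rcases hw with rfl | rfl
  · exact le_rfl
  · exact h.le

lemma selB_pair (y z : Fin n) (h : y < z) (hc : ({y, z} : Finset (Fin n)).card = 2) :
    selB {y, z} hc = z := by
  refine le_antisymm (Finset.max'_le _ _ _ ?_) (Finset.le_max' _ z (by simp))
  intro w hw
  simp only [Finset.mem_insert, Finset.mem_singleton] at hw
  rcases hw with rfl | rfl
  · exact h.le
  · exact le_rfl

variable (p : Fin n)

def II (n : ℕ) (p : Fin n) := {S : Finset (Fin n) // S.card = 2 ∧ p ∉ S}

instance : Fintype (II n p) := by unfold II; infer_instance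

def bb (S : II n p) : PP n →₀ C := uu C one a p (selA S.1 S.2.1) (selB S.1 S.2.1)

lemma gg_apply_zero_left (i j : Fin n) (Q : PP n) (h : i ∉ Q.1) : (gg C one i j) Q = 0 := by
  unfold gg
  split_ifs with h1 h2
  · rw [Finsupp.single_apply, if_neg, ]
    · intro he; apply h; rw [← he]; exact Finset.mem_insert_self i _
  · rw [Finsupp.neg_apply, Finsupp.single_apply, if_neg, neg_zero]
    · intro he; apply h; rw [← he]; exact Finset.mem_insert_self i _
  · rfl

lemma gg_apply_zero_right (i j : Fin n) (Q : PP n) (h : j ∉ Q.1) : (gg C one i j) Q = 0 := by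
  rw [gg_comm]; rw [Finsupp.neg_apply, gg_apply_zero_left C one j i Q h, neg_zero]

lemma uu_apply_of_not_mem (y z : Fin n) (hyz : y < z) (Q : PP n) (hp : p ∉ Q.1)
    (hy : y ∈ Q.1 → z ∈ Q.1 → False) : (uu C one a p y z) Q = 0 := by
  have hQ : pr y z hyz.ne ≠ Q := by
    intro he
    exact hy (by rw [← he]; exact Finset.mem_insert_self _ _)
      (by rw [← he]; simp [pr])
  rw [uu, gg_sorted C one y z hyz]
  simp only [Finsupp.add_apply, Finsupp.sub_apply, Finsupp.smul_apply,
    gg_apply_zero_left C one p z Q hp, gg_apply_zero_left C one p y Q hp,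
    Finsupp.single_apply, if_neg (fun h => hQ h), smul_zero]
  simp

lemma uu_apply_self (y z : Fin n) (hyz : y < z) (hy : y ≠ p) (hz : z ≠ p) :
    (uu C one a p y z) (pr y z hyz.ne) = a p • one := by
  have hp : p ∉ (pr y z hyz.ne).1 := by
    simp only [pr, Finset.mem_insert, Finset.mem_singleton]
    rintro (rfl | rfl) <;> simp_all
  rw [uu, gg_sorted C one y z hyz]
  simp only [Finsupp.add_apply, Finsupp.sub_apply, Finsupp.smul_apply,
    gg_apply_zero_left C one p z _ hp, gg_apply_zero_left C one p y _ hp,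
    Finsupp.single_apply, if_pos rfl, smul_zero]
  simp

lemma bb_indep (hone : one ≠ 0) (hp : a p ≠ 0) : LinearIndependent ℂ (bb C one a p) := by
  rw [linearIndependent_iff']
  intro s g hsum i hi
  set Q : PP n := ⟨i.1, i.2.1⟩ with hQdef
  have hQp : p ∉ Q.1 := i.2.2
  have h0 : (∑ j ∈ s, g j • bb C one a p j) Q = 0 := by rw [hsum]; rfl
  rw [Finsupp.finset_sum_apply] at h0
  have hterm : ∀ j ∈ s, j ≠ i → (g j • bb C one a p j) Q = 0 := by
    intro j _ hji
    rw [Finsupp.smul_apply, bb, uu_apply_of_not_mem C one a p _ _ (selA_lt_selB _ _) Q hQp,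
      smul_zero]
    intro hy hz
    apply hji
    apply Subtype.ext
    have hsub : ({selA j.1 j.2.1, selB j.1 j.2.1} : Finset (Fin n)) ⊆ i.1 := by
      intro w hw
      simp only [Finset.mem_insert, Finset.mem_singleton] at hw
      rcases hw with rfl | rfl
      exacts [hy, hz]
    rw [sel_spec j.1 j.2.1]
    exact Finset.eq_of_subset_of_card_le hsub (by rw [i.2.1, Finset.card_pair (selA_lt_selB j.1 j.2.1).ne])
  rw [Finset.sum_eq_single_of_mem i hi hterm, Finsupp.smul_apply, bb] at h0
  have hA : selA i.1 i.2.1 ∈ i.1 := Finset.min'_mem _ _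
  have hB : selB i.1 i.2.1 ∈ i.1 := Finset.max'_mem _ _
  have hQ : Q = pr (selA i.1 i.2.1) (selB i.1 i.2.1) (selA_lt_selB i.1 i.2.1).ne :=
    Subtype.ext (sel_spec i.1 i.2.1)
  rw [hQ, uu_apply_self C one a p _ _ (selA_lt_selB i.1 i.2.1)
      (fun h => i.2.2 (by rwa [h] at hA)) (fun h => i.2.2 (by rwa [h] at hB)),
      smul_smul] at h0
  rcases smul_eq_zero.mp h0 with h | h
  · rcases mul_eq_zero.mp h with h | h
    · exact h
    · exact absurd h hp
  · exact absurd h hone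

def gens : Set (PP n →₀ C) := {x | ∃ i j k : Fin n, i < j ∧ j < k ∧ x = uu C one a i j k}

lemma uu_p_mem (y z : Fin n) (hyz : y < z) (hy : y ≠ p) (hz : z ≠ p) :
    uu C one a p y z ∈ Set.range (bb C one a p) := by
  have hmem : p ∉ ({y, z} : Finset (Fin n)) := by
    simp only [Finset.mem_insert, Finset.mem_singleton]
    rintro (rfl | rfl)
    exacts [hy rfl, hz rfl]
  refine ⟨⟨{y, z}, Finset.card_pair hyz.ne, hmem⟩, ?_⟩
  show uu C one a p (selA {y, z} (Finset.card_pair hyz.ne)) (selB {y, z} (Finset.card_pair hyz.ne)) = _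
  rw [selA_pair y z hyz, selB_pair y z hyz]

lemma span_bb (hp : a p ≠ 0) :
    Submodule.span ℂ (Set.range (bb C one a p)) = Submodule.span ℂ (gens C one a) := by
  apply le_antisymm <;> rw [Submodule.span_le]
  · rintro x ⟨S, rfl⟩
    have hyz : selA S.1 S.2.1 < selB S.1 S.2.1 := selA_lt_selB _ _
    have hA : selA S.1 S.2.1 ∈ S.1 := Finset.min'_mem _ _
    have hB : selB S.1 S.2.1 ∈ S.1 := Finset.max'_mem _ _
    have hpy : p ≠ selA S.1 S.2.1 := fun h => S.2.2 (by rwa [← h] at hA)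
    have hpz : p ≠ selB S.1 S.2.1 := fun h => S.2.2 (by rwa [← h] at hB)
    rw [bb]
    rcases lt_trichotomy p (selA S.1 S.2.1) with h1 | h1 | h1
    · exact Submodule.subset_span ⟨p, _, _, h1, hyz, rfl⟩
    · exact absurd h1 hpy
    · rcases lt_trichotomy p (selB S.1 S.2.1) with h2 | h2 | h2
      · rw [uu_swap01 C one a (selA S.1 S.2.1) p (selB S.1 S.2.1)]
        exact Submodule.neg_mem _ (Submodule.subset_span ⟨_, p, _, h1, h2, rfl⟩)
      · exact absurd h2 hpz
      · rw [uu_cycle C one a (selA S.1 S.2.1) (selB S.1 S.2.1) p]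
        exact Submodule.subset_span ⟨_, _, p, hyz, h2, rfl⟩
  · rintro x ⟨i, j, k, hij, hjk, rfl⟩
    have hik := hij.trans hjk
    by_cases hpi : p = i
    · subst hpi
      exact Submodule.subset_span (uu_p_mem C one a p j k hjk hij.ne' hik.ne')
    by_cases hpj : p = j
    · subst hpj
      rw [show uu C one a i p k = -uu C one a p i k from uu_swap01 C one a p i k]
      exact Submodule.neg_mem _ (Submodule.subset_span (uu_p_mem C one a p i k hik hij.ne hjk.ne'))
    by_cases hpk : p = k
    · subst hpk
      rw [← uu_cycle C one a i j p]
      exact Submodule.subset_span (uu_p_mem C one a p i j hij hik.ne hjk.ne)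
    · have : uu C one a i j k = (a p)⁻¹ • (a i • uu C one a p j k - a j • uu C one a p i k
          + a k • uu C one a p i j) := by
        rw [← uu_koszul, inv_smul_smul₀ hp]
      rw [this]
      refine Submodule.smul_mem _ _ (Submodule.add_mem _ (Submodule.sub_mem _ ?_ ?_) ?_) <;>
        refine Submodule.smul_mem _ _ (Submodule.subset_span ?_)
      · exact uu_p_mem C one a p j k hjk (fun h => hpj h.symm) (fun h => hpk h.symm)
      · exact uu_p_mem C one a p i k hik (fun h => hpi h.symm) (fun h => hpk h.symm)
      · exact uu_p_mem C one a p i j hij (fun h => hpi h.symm) (fun h => hpj h.symm)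
end

section
variable {n : ℕ} (C : Type) [AddCommGroup C] [Module ℂ C] [NoZeroSMulDivisors ℂ C]
  [FiniteDimensional ℂ C]
  (one : C) (a : Fin n → ℂ) (p : Fin n)

lemma card_PP : Fintype.card (PP n) = n.choose 2 := by
  rw [Fintype.card_subtype]
  have : (Finset.univ.filter fun S : Finset (Fin n) => S.card = 2)
      = Finset.univ.powersetCard 2 := by
    ext S
    simp [Finset.mem_powersetCard]
  rw [this, Finset.card_powersetCard, Finset.card_univ, Fintype.card_fin]

lemma card_II : Fintype.card (II n p) = (n - 1).choose 2 := by
  rw [show Fintype.card (II n p) = Fintype.card {S : Finset (Fin n) // S.card = 2 ∧ p ∉ S} from rfl]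
  rw [Fintype.card_subtype]
  have : (Finset.univ.filter fun S : Finset (Fin n) => S.card = 2 ∧ p ∉ S)
      = (Finset.univ.erase p).powersetCard 2 := by
    ext S
    simp [Finset.mem_powersetCard, Finset.subset_erase, and_comm]
  rw [this, Finset.card_powersetCard, Finset.card_erase_of_mem (Finset.mem_univ p),
    Finset.card_univ, Fintype.card_fin]

lemma finrank_V (hC : Module.finrank ℂ C = 1) :
    Module.finrank ℂ (PP n →₀ C) = n.choose 2 := by
  rw [Module.finrank_finsupp, hC, card_PP, mul_one]

lemma finrank_span_gens (hone : one ≠ 0) (hp : a p ≠ 0) :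
    Module.finrank ℂ (Submodule.span ℂ (gens C one a)) = (n - 1).choose 2 := by
  rw [← span_bb C one a p hp, finrank_span_eq_card (bb_indep C one a p hone hp), card_II]

lemma rank_quot_of_ne (hC : Module.finrank ℂ C = 1) (hone : one ≠ 0) (hp : a p ≠ 0) (hn : 1 ≤ n) :
    Module.rank ℂ ((PP n →₀ C) ⧸ Submodule.span ℂ (gens C one a)) = (n - 1 : ℕ) := by
  haveI : Module.Finite ℂ (PP n →₀ C) := by
    exact Module.Finite.equiv (Finsupp.linearEquivFunOnFinite ℂ C (PP n)).symm
  rw [← Module.finrank_eq_rank]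
  norm_cast
  have h1 := Submodule.finrank_quotient_add_finrank (Submodule.span ℂ (gens C one a))
  rw [finrank_span_gens C one a p hone hp, finrank_V C hC] at h1
  have h2 : n.choose 2 = (n-1).choose 2 + (n-1) := by
    obtain ⟨m, rfl⟩ : ∃ m, n = m + 1 := ⟨n - 1, by omega⟩
    show (m + 1).choose 2 = (m + 1 - 1).choose 2 + (m + 1 - 1)
    rw [Nat.add_sub_cancel, Nat.choose_succ_succ, Nat.choose_one_right, Nat.add_comm]
  omega
end


section MainAux
variable {n : ℕ} (t : Fin n → ℂˣ)

def cvOne (n : ℕ) (t : Fin n → ℂˣ) : CV n t := (1 : ℂ)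

lemma cvOne_ne_zero : cvOne n t ≠ 0 := (one_ne_zero : (1:ℂ) ≠ 0)

instance : NoZeroSMulDivisors ℂ (CV n t) := inferInstanceAs (NoZeroSMulDivisors ℂ ℂ)
instance : FiniteDimensional ℂ (CV n t) := inferInstanceAs (FiniteDimensional ℂ ℂ)

lemma finrank_cv : Module.finrank ℂ (CV n t) = 1 := Module.finrank_self ℂ

lemma span_cvOne : Submodule.span ℂ {cvOne n t} = ⊤ := by
  rw [eq_top_iff]
  rintro x -
  rw [Submodule.mem_span_singleton]
  have hx : ∀ y : ℂ, y • (cvOne n t) = y := fun y => mul_one y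
  exact ⟨x, hx x⟩

lemma span_singles (C : Type) [AddCommGroup C] [Module ℂ C] (one : C) (ι : Type)
    (hone : Submodule.span ℂ {one} = ⊤) :
    Submodule.span ℂ (Set.range fun i : ι => Finsupp.single i one) = ⊤ := by
  rw [eq_top_iff]
  rintro f -
  induction f using Finsupp.induction_linear with
  | zero => exact zero_mem _
  | add f g hf hg => exact add_mem hf hg
  | single a b =>
    have hb : b ∈ Submodule.span ℂ {one} := by rw [hone]; trivial
    rw [Submodule.mem_span_singleton] at hb
    obtain ⟨c, rfl⟩ := hb
    rw [← Finsupp.smul_single]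
    exact Submodule.smul_mem _ _ (Submodule.subset_span ⟨a, rfl⟩)

lemma sorted3 {S : Finset (Fin n)} (h : S.card = 3) :
    ∃ i j k : Fin n, i < j ∧ j < k ∧ S = {i, j, k} := by
  obtain ⟨a, b, c, hab, hac, hbc, rfl⟩ := Finset.card_eq_three.mp h
  have pe : ∀ x y z : Fin n, x < y → y < z →
      ∃ i j k : Fin n, i < j ∧ j < k ∧ ({x, y, z} : Finset (Fin n)) = {i, j, k} :=
    fun x y z h1 h2 => ⟨x, y, z, h1, h2, rfl⟩
  rcases lt_trichotomy a b with h1 | h1 | h1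
  · rcases lt_trichotomy b c with h2 | h2 | h2
    · exact pe a b c h1 h2
    · exact absurd h2 hbc
    · rcases lt_trichotomy a c with h3 | h3 | h3
      · exact ⟨a, c, b, h3, h2, by ext x; simp only [Finset.mem_insert, Finset.mem_singleton]; tauto⟩
      · exact absurd h3 hac
      · exact ⟨c, a, b, h3, h1, by ext x; simp only [Finset.mem_insert, Finset.mem_singleton]; tauto⟩
  · exact absurd h1 hab
  · rcases lt_trichotomy a c with h2 | h2 | h2
    · exact ⟨b, a, c, h1, h2, by ext x; simp only [Finset.mem_insert, Finset.mem_singleton]; tauto⟩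
    · exact absurd h2 hac
    · rcases lt_trichotomy b c with h3 | h3 | h3
      · exact ⟨b, c, a, h3, h2, by ext x; simp only [Finset.mem_insert, Finset.mem_singleton]; tauto⟩
      · exact absurd h3 hbc
      · exact ⟨c, b, a, h3, h1, by ext x; simp only [Finset.mem_insert, Finset.mem_singleton]; tauto⟩

lemma card3_of_sorted {i j k : Fin n} (hij : i < j) (hjk : j < k) :
    ({i, j, k} : Finset (Fin n)).card = 3 := by
  rw [Finset.card_insert_of_notMem (by simp [hij.ne, (hij.trans hjk).ne]),
    Finset.card_pair hjk.ne]

end MainAux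

/-- **Characteristic varieties of the free group `F_n`**: with `B = coker d₃`
the Alexander invariant of `F_n`, one has `V_k(B) = (ℂˣ)ⁿ` for `1 ≤ k ≤ n-1`,
`V_k(B) = {1}` for `n ≤ k ≤ n(n-1)/2`, and `V_k(B) = ∅` for `k > n(n-1)/2`. -/
theorem characteristic_varieties_free_group (n : ℕ) (hn : 1 ≤ n)
    (d : ({S : Finset (Fin n) // S.card = 3} →₀ Lau n) →ₗ[Lau n]
         ({S : Finset (Fin n) // S.card = 2} →₀ Lau n))
    (hd : ∀ i j k : Fin n, i < j → j < k →
      ∀ (h3 : ({i, j, k} : Finset (Fin n)).card = 3)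
        (hjk : ({j, k} : Finset (Fin n)).card = 2)
        (hik : ({i, k} : Finset (Fin n)).card = 2)
        (hij : ({i, j} : Finset (Fin n)).card = 2),
        d (Finsupp.single ⟨{i, j, k}, h3⟩ 1) =
          (tvar n i - 1) • Finsupp.single ⟨{j, k}, hjk⟩ 1
          - (tvar n j - 1) • Finsupp.single ⟨{i, k}, hik⟩ 1
          + (tvar n k - 1) • Finsupp.single ⟨{i, j}, hij⟩ 1)
    (k : ℕ) (hk : 1 ≤ k) (t : Fin n → ℂˣ) :
    (k : Cardinal) ≤ Module.rank ℂ
        (TensorProduct (Lau n) (CV n t)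
          (({S : Finset (Fin n) // S.card = 2} →₀ Lau n) ⧸ LinearMap.range d)) ↔
      (k ≤ n - 1 ∨ (t = 1 ∧ k ≤ n * (n - 1) / 2)) := by
  classical
  have hik' : ∀ {i j k : Fin n}, i < j → j < k → i < k := fun h1 h2 => h1.trans h2
  set a : Fin n → ℂ := fun i => (t i : ℂ) - 1 with ha
  set W := LinearMap.range d with hWdef
  let φM := TensorProduct.finsuppScalarRight (Lau n) (Lau n) (CV n t) (PP n)
  let φN := TensorProduct.finsuppScalarRight (Lau n) (Lau n) (CV n t) {S : Finset (Fin n) // S.card = 3}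
  let π := LinearMap.lTensor (CV n t) W.mkQ
  have hπsurj : Function.Surjective π :=
    LinearMap.lTensor_surjective _ (Submodule.mkQ_surjective W)
  have hexact : Function.Exact (LinearMap.lTensor (CV n t) d) π :=
    lTensor_exact (CV n t) (LinearMap.exact_map_mkQ_range d) (Submodule.mkQ_surjective W)
  let Ψ := π ∘ₗ φM.symm.toLinearMap
  have hΨsurj : Function.Surjective Ψ := hπsurj.comp φM.symm.surjective
  let DD := φM.toLinearMap ∘ₗ LinearMap.lTensor (CV n t) d ∘ₗ φN.symm.toLinearMap
  have hker : LinearMap.ker Ψ = LinearMap.range DD := by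
    show LinearMap.ker (π ∘ₗ φM.symm.toLinearMap) = _
    rw [LinearMap.ker_comp, hexact.linearMap_ker_eq]
    have h1 : Submodule.comap φM.symm.toLinearMap (LinearMap.range (LinearMap.lTensor (CV n t) d))
        = Submodule.map φM.toLinearMap (LinearMap.range (LinearMap.lTensor (CV n t) d)) := by
      ext x
      rw [Submodule.mem_comap, Submodule.mem_map]
      constructor
      · intro h; exact ⟨φM.symm x, h, by simp⟩
      · rintro ⟨y, hy, rfl⟩; simpa using hy
    rw [h1, ← LinearMap.range_comp]
    show _ = LinearMap.range ((φM.toLinearMap ∘ₗ LinearMap.lTensor (CV n t) d) ∘ₗ φN.symm.toLinearMap)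
    exact (LinearMap.range_comp_of_range_eq_top _
      (LinearMap.range_eq_top.mpr φN.symm.surjective)).symm
  have φ_single : ∀ (ι : Type) [DecidableEq ι] (m : CV n t) (i : ι),
      TensorProduct.finsuppScalarRight (Lau n) (Lau n) (CV n t) ι (m ⊗ₜ[Lau n] Finsupp.single i (1 : Lau n))
        = Finsupp.single i m := by
    intro ι _ m i
    ext q
    rw [TensorProduct.finsuppScalarRight_apply_tmul_apply, Finsupp.single_apply,
      Finsupp.single_apply]
    split_ifs
    · exact one_smul _ m
    · exact zero_smul _ m
  have hsm : ∀ (i : Fin n) (P : PP n),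
      (tvar n i - 1) • Finsupp.single P (cvOne n t) = a i • Finsupp.single P (cvOne n t) := by
    intro i P
    rw [Finsupp.smul_single, Finsupp.smul_single]
    congr 1
    rw [cv_smul_def, map_sub, eps_tvar, map_one]
  have hDD : ∀ (i j k : Fin n) (hij : i < j) (hjk : j < k)
      (h3 : ({i, j, k} : Finset (Fin n)).card = 3),
      DD (Finsupp.single (⟨{i, j, k}, h3⟩ : {S : Finset (Fin n) // S.card = 3}) (cvOne n t))
        = uu (CV n t) (cvOne n t) a i j k := by
    intro i j k hij hjk h3
    show (TensorProduct.finsuppScalarRight (Lau n) (Lau n) (CV n t) (PP n))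
      (LinearMap.lTensor (CV n t) d
        ((TensorProduct.finsuppScalarRight (Lau n) (Lau n) (CV n t)
            {S : Finset (Fin n) // S.card = 3}).symm
          (Finsupp.single (⟨{i, j, k}, h3⟩ : {S : Finset (Fin n) // S.card = 3})
            (cvOne n t)))) = _
    rw [TensorProduct.finsuppScalarRight_symm_apply_single, LinearMap.lTensor_tmul,
      hd i j k hij hjk h3 (Finset.card_pair hjk.ne) (Finset.card_pair (hik' hij hjk).ne)
        (Finset.card_pair hij.ne),
      TensorProduct.tmul_add, TensorProduct.tmul_sub, TensorProduct.tmul_smul,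
      TensorProduct.tmul_smul, TensorProduct.tmul_smul, map_add, map_sub, map_smul, map_smul,
      map_smul, φ_single, φ_single, φ_single, hsm, hsm, hsm,
      uu_sorted (CV n t) (cvOne n t) a i j k hij hjk]
    rfl
  have hr1 : LinearMap.range (DD.restrictScalars ℂ)
      = Submodule.span ℂ (gens (CV n t) (cvOne n t) a) := by
    rw [← Submodule.map_top, ← span_singles (CV n t) (cvOne n t)
      {S : Finset (Fin n) // S.card = 3} (span_cvOne t), Submodule.map_span]
    apply le_antisymm <;> rw [Submodule.span_le]
    · rintro x ⟨y, ⟨S, rfl⟩, rfl⟩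
      obtain ⟨i, j, k, hij, hjk, hS⟩ := sorted3 S.2
      have hSe : S = ⟨{i, j, k}, by rw [← hS]; exact S.2⟩ := Subtype.ext hS
      rw [hSe]
      show DD (Finsupp.single _ (cvOne n t)) ∈ _
      rw [hDD i j k hij hjk _]
      exact Submodule.subset_span ⟨i, j, k, hij, hjk, rfl⟩
    · rintro x ⟨i, j, k, hij, hjk, rfl⟩
      refine Submodule.subset_span ⟨Finsupp.single
        (⟨{i, j, k}, card3_of_sorted hij hjk⟩ : {S : Finset (Fin n) // S.card = 3})
        (cvOne n t), ⟨⟨_, rfl⟩, ?_⟩⟩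
      exact hDD i j k hij hjk _
  have hkerc : LinearMap.ker (Ψ.restrictScalars ℂ)
      = Submodule.span ℂ (gens (CV n t) (cvOne n t) a) := by
    ext x
    rw [LinearMap.mem_ker, LinearMap.restrictScalars_apply, ← LinearMap.mem_ker, hker, ← hr1]
    exact Iff.rfl
  have hΨcsurj : Function.Surjective (Ψ.restrictScalars ℂ) := hΨsurj
  have hrank : Module.rank ℂ (TensorProduct (Lau n) (CV n t)
        (({S : Finset (Fin n) // S.card = 2} →₀ Lau n) ⧸ LinearMap.range d))
      = Module.rank ℂ ((PP n →₀ CV n t) ⧸ Submodule.span ℂ (gens (CV n t) (cvOne n t) a)) := by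
    rw [← hkerc]
    exact ((Ψ.restrictScalars ℂ).quotKerEquivOfSurjective hΨcsurj).symm.rank_eq
  rw [hrank]
  by_cases ht : t = 1
  · have haz : a = fun _ => 0 := by
      funext i
      rw [ha]
      simp [ht]
    have hz : Submodule.span ℂ (gens (CV n t) (cvOne n t) a) = ⊥ := by
      rw [Submodule.span_eq_bot]
      rintro x ⟨i, j, k, hij, hjk, rfl⟩
      rw [haz, uu]
      simp
    rw [hz]
    rw [(Submodule.quotEquivOfEqBot _ rfl).rank_eq]
    haveI : Module.Finite ℂ (PP n →₀ CV n t) :=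
      Module.Finite.equiv (Finsupp.linearEquivFunOnFinite ℂ (CV n t) (PP n)).symm
    rw [← Module.finrank_eq_rank, finrank_V (CV n t) (finrank_cv t), Nat.cast_le]
    have hch : n.choose 2 = n * (n - 1) / 2 := Nat.choose_two_right n
    have hle : n - 1 ≤ n * (n - 1) / 2 := by
      rcases Nat.lt_or_ge n 2 with h | h
      · interval_cases n <;> simp
      · rw [Nat.le_div_iff_mul_le (by norm_num)]
        calc (n - 1) * 2 ≤ (n - 1) * n := Nat.mul_le_mul_left _ h
        _ = n * (n - 1) := Nat.mul_comm _ _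
    constructor
    · intro h
      exact Or.inr ⟨ht, by rwa [hch] at h⟩
    · rintro (h | ⟨-, h⟩)
      · omega
      · omega
  · have hpex : ∃ p, a p ≠ 0 := by
      by_contra h
      push_neg at h
      apply ht
      funext i
      have := h i
      rw [ha] at this
      simp only [sub_eq_zero] at this
      exact Units.val_eq_one.mp this
      
    obtain ⟨p, hp⟩ := hpex
    rw [rank_quot_of_ne (CV n t) (cvOne n t) a p (finrank_cv t) (cvOne_ne_zero t) hp hn,
      Nat.cast_le]
    simp [ht]
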